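/- Assume c ≠ 0 and τ ≥ 0. Then λ = 0 is a root of the characteristic function P if and only if c²b₁b₂ = D; moreover, λ = 0 is a simple root (i.e., P(0) = 0 and P′(0) ≠ 0) if and only if c²b₁b₂ = D and τ ≠ (c²(b₁+b₂) − C)/(2c²b₁b₂). -/

import Mathlib

noncomputable section

/-- Coefficient A = b₁+b₂−2a -/
def cA (a b₁ b₂ : ℝ) : ℝ := b₁ + b₂ - 2*a
/-- Coefficient B = b₁b₂−2a(b₁+b₂)+a²+2 -/
def cB (a b₁ b₂ : ℝ) : ℝ := b₁*b₂ - 2*a*(b₁+b₂) + a^2 + 2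
/-- Coefficient C = (a²+1)(b₁+b₂)−2ab₁b₂−2a -/
def cC (a b₁ b₂ : ℝ) : ℝ := (a^2+1)*(b₁+b₂) - 2*a*b₁*b₂ - 2*a
/-- Coefficient D = a²b₁b₂−a(b₁+b₂)+1 -/
def cD (a b₁ b₂ : ℝ) : ℝ := a^2*b₁*b₂ - a*(b₁+b₂) + 1
/-- Coefficient E = c² -/
def cE (c : ℝ) : ℝ := c^2
/-- P̂ = A²−2B -/
def qP (a b₁ b₂ c : ℝ) : ℝ := (cA a b₁ b₂)^2 - 2*(cB a b₁ b₂)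
/-- Q̂ = B²+2D−2AC−E² -/
def qQ (a b₁ b₂ c : ℝ) : ℝ :=
  (cB a b₁ b₂)^2 + 2*(cD a b₁ b₂) - 2*(cA a b₁ b₂)*(cC a b₁ b₂) - (cE c)^2
/-- R̂ = C²−2BD−E²(b₁²+b₂²) -/
def qR (a b₁ b₂ c : ℝ) : ℝ :=
  (cC a b₁ b₂)^2 - 2*(cB a b₁ b₂)*(cD a b₁ b₂) - (cE c)^2*(b₁^2+b₂^2)
/-- Ŝ = D²−E²(b₁b₂)² -/
def qS (a b₁ b₂ c : ℝ) : ℝ := (cD a b₁ b₂)^2 - (cE c)^2*(b₁*b₂)^2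
/-- Auxiliary quartic h(z) = z⁴+P̂z³+Q̂z²+R̂z+Ŝ -/
def hq (a b₁ b₂ c z : ℝ) : ℝ :=
  z^4 + qP a b₁ b₂ c * z^3 + qQ a b₁ b₂ c * z^2 + qR a b₁ b₂ c * z + qS a b₁ b₂ c
/-- Derivative h′(z) = 4z³+3P̂z²+2Q̂z+R̂ -/
def hq' (a b₁ b₂ c z : ℝ) : ℝ :=
  4*z^3 + 3*qP a b₁ b₂ c * z^2 + 2*qQ a b₁ b₂ c * z + qR a b₁ b₂ c
/-- Characteristic function P(λ) = λ⁴+Aλ³+Bλ²+Cλ+D − E(λ+b₁)(λ+b₂)e^{−2λτ} -/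
def charP (a b₁ b₂ c τ : ℝ) (z : ℂ) : ℂ :=
  z^4 + (cA a b₁ b₂ : ℂ)*z^3 + (cB a b₁ b₂ : ℂ)*z^2 + (cC a b₁ b₂ : ℂ)*z + (cD a b₁ b₂ : ℂ)
    - (cE c : ℂ) * (z + (b₁:ℂ)) * (z + (b₂:ℂ)) * Complex.exp (-(2*z*(τ:ℂ)))


lemma charP_deriv (a b₁ b₂ c τ : ℝ) :
    deriv (charP a b₁ b₂ c τ) 0 =
      ((cC a b₁ b₂ : ℂ) - (cE c : ℂ)*((b₁:ℂ)+b₂) + 2*(τ:ℂ)*(cE c : ℂ)*b₁*b₂) := by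
  have h1 : HasDerivAt (fun z : ℂ => z^4 + (cA a b₁ b₂ : ℂ)*z^3 + (cB a b₁ b₂ : ℂ)*z^2
      + (cC a b₁ b₂ : ℂ)*z + (cD a b₁ b₂ : ℂ))
      ((4:ℂ)*0^3 + (cA a b₁ b₂ : ℂ)*(3*0^2) + (cB a b₁ b₂ : ℂ)*(2*0^1)
        + (cC a b₁ b₂ : ℂ)*1 + 0) 0 := by
    exact ((((hasDerivAt_pow 4 (0:ℂ)).add
      (((hasDerivAt_pow 3 (0:ℂ)).const_mul _))).add
      (((hasDerivAt_pow 2 (0:ℂ)).const_mul _))).add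
      ((hasDerivAt_id (0:ℂ)).const_mul _)).add_const _ |>.congr_deriv (by norm_num)
  have hexp : HasDerivAt (fun z : ℂ => Complex.exp (-(2*z*(τ:ℂ)))) (-(2*(τ:ℂ))) 0 := by
    have h : HasDerivAt (fun z : ℂ => -(2*z*(τ:ℂ))) (-(2*(τ:ℂ))) 0 := by
      simpa using (((hasDerivAt_id (0:ℂ)).const_mul (2:ℂ)).mul_const (τ:ℂ)).fun_neg
    simpa using h.cexp
  have h2 : HasDerivAt (fun z : ℂ => (cE c : ℂ) * (z + (b₁:ℂ)) * (z + (b₂:ℂ))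
      * Complex.exp (-(2*z*(τ:ℂ))))
      ((cE c : ℂ)*((b₁:ℂ)+b₂) - 2*(τ:ℂ)*(cE c : ℂ)*b₁*b₂) 0 := by
    have ha1 : HasDerivAt (fun z : ℂ => (cE c : ℂ) * (z + (b₁:ℂ))) (cE c : ℂ) 0 := by
      simpa using (((hasDerivAt_id (0:ℂ)).add_const (b₁:ℂ)).const_mul (cE c : ℂ))
    have ha2 : HasDerivAt (fun z : ℂ => z + (b₂:ℂ)) 1 0 :=
      (hasDerivAt_id (0:ℂ)).add_const (b₂:ℂ)
    have := (ha1.fun_mul ha2).fun_mul hexp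
    convert this using 1
    case e'_4 => rfl
    case e'_5 => rfl
    simp [Complex.exp_zero]
    try ring
  have hd : HasDerivAt (charP a b₁ b₂ c τ)
      ((cC a b₁ b₂ : ℂ) - (cE c : ℂ)*((b₁:ℂ)+b₂) + 2*(τ:ℂ)*(cE c : ℂ)*b₁*b₂) 0 := by
    have := h1.fun_sub h2
    convert this using 1
    case e'_4 => rfl
    case e'_5 => rfl
    case e'_8 => rfl
    ring
  exact hd.deriv

theorem stmt_12 (a b₁ b₂ c τ : ℝ) (ha : 0 < a) (hb₁ : 0 < b₁) (hb₂ : 0 < b₂)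
    (hc : c ≠ 0) (hτ : 0 ≤ τ) :
    (charP a b₁ b₂ c τ 0 = 0 ↔ c^2 * b₁ * b₂ = cD a b₁ b₂) ∧
      ((charP a b₁ b₂ c τ 0 = 0 ∧ deriv (charP a b₁ b₂ c τ) 0 ≠ 0) ↔
        (c^2 * b₁ * b₂ = cD a b₁ b₂ ∧
          τ ≠ (c^2 * (b₁+b₂) - cC a b₁ b₂) / (2 * c^2 * b₁ * b₂))) := by
  have hden : 2 * c^2 * b₁ * b₂ ≠ 0 := by positivity
  have h0 : (charP a b₁ b₂ c τ 0 = 0 ↔ c^2 * b₁ * b₂ = cD a b₁ b₂) := by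
    have : charP a b₁ b₂ c τ 0 = ((cD a b₁ b₂ - c^2 * b₁ * b₂ : ℝ) : ℂ) := by
      simp [charP, cE]
      try push_cast
      try ring
    rw [this]
    rw [show ((cD a b₁ b₂ - c^2 * b₁ * b₂ : ℝ) : ℂ) = 0 ↔
        (cD a b₁ b₂ - c^2 * b₁ * b₂ : ℝ) = 0 from by exact_mod_cast Complex.ofReal_eq_zero]
    constructor <;> intro h <;> linarith [h]
  have hderiv : (deriv (charP a b₁ b₂ c τ) 0 ≠ 0 ↔
      τ ≠ (c^2 * (b₁+b₂) - cC a b₁ b₂) / (2 * c^2 * b₁ * b₂)) := by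
    rw [charP_deriv]
    have hcast : ((cC a b₁ b₂ : ℂ) - (cE c : ℂ)*((b₁:ℂ)+b₂) + 2*(τ:ℂ)*(cE c : ℂ)*b₁*b₂)
        = ((cC a b₁ b₂ - c^2*(b₁+b₂) + 2*τ*c^2*b₁*b₂ : ℝ) : ℂ) := by
      push_cast [cE]; try ring
    rw [hcast]
    simp only [ne_eq, Complex.ofReal_eq_zero]
    rw [not_iff_not, eq_div_iff hden]
    constructor <;> intro h <;> nlinarith [h]
  exact ⟨h0, by rw [h0, hderiv]⟩
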